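/- Let F/K be a function field of genus g and A a place of degree 1. If D is a degree-zero divisor with ℓ(D + rA) = 1 for the minimal such r, and a is a nonzero element of L(D + rA), then D ≡ D̃ − rA (linear equivalence), where D̃ = D + rA + div(a), and D̃ − rA is the unique maximal reduction of D along A with degree-zero class. -/

import Mathlib

/-- An axiomatic model of a (geometric) algebraic function field `F` over `K`
with set of places `Place`, place degrees, genus, Riemann-Roch dimension `ell`,
and principal divisor map `pdiv`.  Divisors are finitely supported `ℤ`-valued
functions on places. -/
structure FnFld (K F Place : Type*) [Field K] [Field F] [Algebra K F] where
  /-- degree of a place -/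
  degP : Place → ℕ
  degP_pos : ∀ P, 0 < degP P
  /-- genus -/
  g : ℕ
  /-- dimension of the Riemann-Roch space of a divisor -/
  ell : (Place →₀ ℤ) → ℕ
  /-- principal divisor of a function (junk value at `0`) -/
  pdiv : F → (Place →₀ ℤ)
  pdiv_mul : ∀ a b : F, a ≠ 0 → b ≠ 0 → pdiv (a * b) = pdiv a + pdiv b
  pdiv_inv : ∀ a : F, a ≠ 0 → pdiv a⁻¹ = -(pdiv a)
  degD_pdiv : ∀ a : F, a ≠ 0 → ((pdiv a).sum fun P n => n * (degP P : ℤ)) = 0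
  pdiv_eq_zero_iff : ∀ a : F, a ≠ 0 →
    (pdiv a = 0 ↔ ∃ c : K, a = algebraMap K F c)
  ell_mono : ∀ {D D' : Place →₀ ℤ}, D ≤ D' → ell D ≤ ell D'
  ell_diff_le : ∀ {D D' : Place →₀ ℤ}, D ≤ D' →
    (ell D' : ℤ) - ell D ≤
      (D'.sum fun P n => n * (degP P : ℤ)) - (D.sum fun P n => n * (degP P : ℤ))
  ell_eq_zero_of_neg : ∀ D : Place →₀ ℤ,
    (D.sum fun P n => n * (degP P : ℤ)) < 0 → ell D = 0
  /-- Riemann's inequality `ℓ(D) ≥ deg D + 1 - g` -/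
  riemann : ∀ D : Place →₀ ℤ,
    (D.sum fun P n => n * (degP P : ℤ)) + 1 - g ≤ (ell D : ℤ)
  ell_pos_of_nonneg : ∀ D : Place →₀ ℤ, 0 ≤ D → 0 < ell D
  ell_pos_iff : ∀ D : Place →₀ ℤ, 0 < ell D ↔ ∃ a : F, a ≠ 0 ∧ 0 ≤ D + pdiv a
  ell_add_pdiv : ∀ (D : Place →₀ ℤ) (a : F), a ≠ 0 → ell (D + pdiv a) = ell D
  /-- if `ℓ(E) = 1` then any two nonzero elements of `L(E)` are `K`-proportional -/
  ell_one_dim : ∀ E : Place →₀ ℤ, ell E = 1 → ∀ a b : F, a ≠ 0 → b ≠ 0 →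
    0 ≤ E + pdiv a → 0 ≤ E + pdiv b → ∃ c : K, b = algebraMap K F c * a

namespace FnFld

variable {K F Place : Type*} [Field K] [Field F] [Algebra K F]

/-- degree of a divisor -/
def degD (Φ : FnFld K F Place) (D : Place →₀ ℤ) : ℤ :=
  D.sum fun P n => n * (Φ.degP P : ℤ)

/-- height of a divisor -/
def ht (Φ : FnFld K F Place) (D : Place →₀ ℤ) : ℤ :=
  D.sum fun P n => |n| * (Φ.degP P : ℤ)

/-- the Riemann-Roch space of a divisor, as a set of nonzero functions -/
def L (Φ : FnFld K F Place) (E : Place →₀ ℤ) : Set F :=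
  {a : F | a ≠ 0 ∧ 0 ≤ E + Φ.pdiv a}

/-- linear equivalence of divisors -/
def LinEquiv (Φ : FnFld K F Place) (D D' : Place →₀ ℤ) : Prop :=
  ∃ a : F, a ≠ 0 ∧ D - D' = Φ.pdiv a

/-- `Dt` is maximally reduced along the place `A` -/
def MaxReduced (Φ : FnFld K F Place) (A : Place) (Dt : Place →₀ ℤ) : Prop :=
  0 ≤ Dt ∧ ∀ s : ℤ, 1 ≤ s → Φ.ell (Dt - Finsupp.single A s) = 0

end FnFld


section Helpers
open FnFld
variable {K F Place : Type*} [Field K] [Field F] [Algebra K F] (Φ : FnFld K F Place)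

lemma degD_add' (D D' : Place →₀ ℤ) : Φ.degD (D + D') = Φ.degD D + Φ.degD D' :=
  Finsupp.sum_add_index' (fun P => zero_mul _) (fun P m n => add_mul m n _)

lemma degD_single' (A : Place) (s : ℤ) : Φ.degD (Finsupp.single A s) = s * Φ.degP A :=
  Finsupp.sum_single_index (zero_mul _)

lemma degD_zero' : Φ.degD 0 = 0 := Finsupp.sum_zero_index

lemma degD_neg' (D : Place →₀ ℤ) : Φ.degD (-D) = -Φ.degD D := by
  have h := degD_add' Φ D (-D)
  rw [add_neg_cancel, degD_zero'] at h
  linarith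

lemma degD_sub' (D D' : Place →₀ ℤ) : Φ.degD (D - D') = Φ.degD D - Φ.degD D' := by
  rw [sub_eq_add_neg, degD_add', degD_neg', sub_eq_add_neg]

lemma degD_nonneg' {D : Place →₀ ℤ} (h : 0 ≤ D) : 0 ≤ Φ.degD D := by
  refine Finset.sum_nonneg fun P _ => ?_
  have hP := Finsupp.le_def.mp h P
  simp only [Finsupp.coe_zero, Pi.zero_apply] at hP
  exact mul_nonneg hP (Int.natCast_nonneg _)

lemma single_mono' (A : Place) {s t : ℤ} (h : s ≤ t) :
    Finsupp.single A s ≤ Finsupp.single A t := by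
  rw [Finsupp.le_def]
  intro P
  classical
  simp only [Finsupp.single_apply]
  split <;> simp [h]

end Helpers

open FnFld in
/-- if `r` is the minimal nonnegative integer with `ℓ(D + rA) = 1`
and `a` is a nonzero element of `L(D + rA)`, then `D ≡ D̃ - rA` with
`D̃ = D + rA + div(a)`, and `D̃ - rA` is the unique maximal reduction of `D` along `A`. -/
theorem stmt14 {K F Place : Type*} [Field K] [Field F] [Algebra K F]
    (Φ : FnFld K F Place) (A : Place) (hA : Φ.degP A = 1)
    (D : Place →₀ ℤ) (hD : Φ.degD D = 0) (r : ℤ)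
    (hr : IsLeast {s : ℤ | 0 ≤ s ∧ Φ.ell (D + Finsupp.single A s) = 1} r)
    (a : F) (ha : a ≠ 0) (haL : 0 ≤ D + Finsupp.single A r + Φ.pdiv a) :
    Φ.LinEquiv D ((D + Finsupp.single A r + Φ.pdiv a) - Finsupp.single A r) ∧
    Φ.MaxReduced A (D + Finsupp.single A r + Φ.pdiv a) ∧
    ∀ (Dt' : Place →₀ ℤ) (r' : ℤ), Φ.MaxReduced A Dt' → Φ.degD Dt' = r' →
      Φ.LinEquiv D (Dt' - Finsupp.single A r') →
      Dt' = D + Finsupp.single A r + Φ.pdiv a ∧ r' = r := by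

  obtain ⟨⟨hr0, hrell⟩, hrmin⟩ := hr
  have hellsub : ∀ s : ℤ,
      Φ.ell (D + Finsupp.single A r + Φ.pdiv a - Finsupp.single A s)
        = Φ.ell (D + Finsupp.single A (r - s)) := by
    intro s
    have heq : D + Finsupp.single A r + Φ.pdiv a - Finsupp.single A s
        = (D + Finsupp.single A (r - s)) + Φ.pdiv a := by
      rw [Finsupp.single_sub]; abel
    rw [heq, Φ.ell_add_pdiv _ a ha]
  have hellmid : ∀ t : ℤ, t < r → Φ.ell (D + Finsupp.single A t) = 0 := by
    intro t ht
    by_cases htn : Φ.degD (D + Finsupp.single A t) < 0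
    · exact Φ.ell_eq_zero_of_neg _ htn
    · push_neg at htn
      have hdeg : Φ.degD (D + Finsupp.single A t) = t := by
        rw [degD_add', degD_single', hA, hD]; ring
      have ht0 : 0 ≤ t := by rw [hdeg] at htn; exact htn
      have hle : Φ.ell (D + Finsupp.single A t) ≤ 1 := by
        rw [← hrell]
        exact Φ.ell_mono (add_le_add_right (single_mono' A ht.le) D)
      have hne : Φ.ell (D + Finsupp.single A t) ≠ 1 := by
        intro h1
        exact absurd (hrmin ⟨ht0, h1⟩) (by linarith)
      omega
  refine ⟨⟨a⁻¹, inv_ne_zero ha, ?_⟩, ⟨haL, ?_⟩, ?_⟩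
  · rw [Φ.pdiv_inv a ha]; abel
  · intro s hs
    rw [hellsub s]
    exact hellmid (r - s) (by linarith)
  · rintro Dt' r' ⟨hpos, hred⟩ hdeg ⟨b, hb, hpb⟩
    have hDt'eq : D + Finsupp.single A r' = Dt' + Φ.pdiv b := by
      rw [← hpb]; abel
    have hellDt' : Φ.ell Dt' = 1 := by
      have h1 : 0 < Φ.ell Dt' := Φ.ell_pos_of_nonneg Dt' hpos
      have h01 : (0 : Place →₀ ℤ) ≤ Finsupp.single A 1 := by
        have h := single_mono' A (show (0:ℤ) ≤ 1 by norm_num)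
        simpa using h
      have hle : Dt' - Finsupp.single A 1 ≤ Dt' := sub_le_self Dt' h01
      have h2 := Φ.ell_diff_le hle
      rw [hred 1 le_rfl] at h2
      have hd : Φ.degD (Dt' - Finsupp.single A 1) = Φ.degD Dt' - 1 := by
        rw [degD_sub', degD_single', hA]; ring
      have : (Φ.ell Dt' : ℤ) ≤ 1 := by
        have h2' : (Φ.ell Dt' : ℤ) - 0 ≤ Φ.degD Dt' - Φ.degD (Dt' - Finsupp.single A 1) := h2
        rw [hd] at h2'; linarith
      omega
    have hellr' : Φ.ell (D + Finsupp.single A r') = 1 := by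
      rw [hDt'eq, Φ.ell_add_pdiv _ b hb, hellDt']
    have hr'0 : 0 ≤ r' := hdeg ▸ degD_nonneg' Φ hpos
    have hrler' : r ≤ r' := hrmin ⟨hr'0, hellr'⟩
    have hr'ler : r' ≤ r := by
      by_contra hlt
      push_neg at hlt
      have heq : Dt' - Finsupp.single A (r' - r)
          = (D + Finsupp.single A r) + Φ.pdiv b⁻¹ := by
        rw [Φ.pdiv_inv b hb, Finsupp.single_sub]
        have : Dt' = D + Finsupp.single A r' - Φ.pdiv b := by rw [hDt'eq]; abel
        rw [this]; abel
      have h0 := hred (r' - r) (by linarith)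
      rw [heq, Φ.ell_add_pdiv _ b⁻¹ (inv_ne_zero hb), hrell] at h0
      exact one_ne_zero h0
    have hrr : r' = r := le_antisymm hr'ler hrler'
    subst hrr
    refine ⟨?_, rfl⟩
    have hDt'eq2 : Dt' = (D + Finsupp.single A r') + Φ.pdiv b⁻¹ := by
      rw [Φ.pdiv_inv b hb]
      have : Dt' = D + Finsupp.single A r' - Φ.pdiv b := by rw [hDt'eq]; abel
      rw [this]; abel
    have hbL : 0 ≤ (D + Finsupp.single A r') + Φ.pdiv b⁻¹ := hDt'eq2 ▸ hpos
    obtain ⟨c, hc⟩ := Φ.ell_one_dim _ hrell a b⁻¹ ha (inv_ne_zero hb) haL hbL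
    have hc0 : c ≠ 0 := by
      intro h; rw [h] at hc; simp at hc; exact hb hc
    have hpc : Φ.pdiv (algebraMap K F c) = 0 :=
      (Φ.pdiv_eq_zero_iff _ (by simpa using hc0)).mpr ⟨c, rfl⟩
    have hpb' : Φ.pdiv b⁻¹ = Φ.pdiv a := by
      rw [hc, Φ.pdiv_mul _ _ (by simpa using hc0) ha, hpc, zero_add]
    rw [hDt'eq2, hpb']
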